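/- For every natural number n ≥ 1 and every j ∈ {0,1,…,n}, the following identity holds in the field ℚ(X,Z) of rational functions: ∑_{I ⊆ {0,1,…,n−1} with min(I ∪ {n}) = j} binom(n,I)_{X^{−1}} · ∏_{i ∈ I} gp((X^{i}·Z)^{n−i}) = binom(n,j)_X · Z^{n−j} / (X^{j}·Z; X)_{n−j}. -/

import Mathlib

/-!
STATEMENT 2: the identity (equ:S) for the partial sums `S_{n,j}(X,Z)` in ℚ(X,Z).
-/

noncomputable section

open scoped Classical

/-- The Pochhammer symbol `(A; X)_k = ∏_{i=0}^{k-1} (1 - A·X^i)`. -/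
def qPoch {F : Type*} [CommRing F] (A X : F) (k : ℕ) : F :=
  ∏ i ∈ Finset.range k, (1 - A * X ^ i)

/-- `(N)_X! = ∏_{k=1}^{N} (1 - X^k)`, with `(0)_X! = 1`. -/
def qFact {F : Type*} [CommRing F] (X : F) (N : ℕ) : F :=
  ∏ k ∈ Finset.range N, (1 - X ^ (k + 1))

/-- The Gaussian binomial `binom(a,b)_X = (a)_X! / ((a-b)_X! · (b)_X!)`. -/
def qBinom {F : Type*} [Field F] (X : F) (a b : ℕ) : F :=
  qFact X a / (qFact X (a - b) * qFact X b)

/-- The Gaussian multinomial `binom(n,I)_X` for `I = {i_1 < … < i_l}`. -/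
def qMultinom {F : Type*} [Field F] (X : F) (n : ℕ) (I : Finset ℕ) : F :=
  (((I.sort (· ≤ ·)).zip ((I.sort (· ≤ ·)).tail ++ [n])).map
    (fun p => qBinom X p.2 p.1)).prod

/-- `i_1 = min (I ∪ {n})`. -/
def minI (n : ℕ) (I : Finset ℕ) : ℕ := (insert n I).min' (Finset.insert_nonempty n I)

/-- `gp(T) = T/(1-T)`. -/
def gp {F : Type*} [DivisionRing F] (T : F) : F := T / (1 - T)

/-- The field ℚ(X,Z). -/
abbrev F2 : Type := FractionRing (MvPolynomial (Fin 2) ℚ)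

def XX : F2 := algebraMap (MvPolynomial (Fin 2) ℚ) F2 (MvPolynomial.X 0)
def ZZ : F2 := algebraMap (MvPolynomial (Fin 2) ℚ) F2 (MvPolynomial.X 1)

variable {K : Type*} [Field K] {q : K}

lemma qFact_zero : qFact q 0 = 1 := by simp [qFact]

lemma qFact_succ (N : ℕ) : qFact q (N + 1) = qFact q N * (1 - q ^ (N + 1)) :=
  Finset.prod_range_succ _ _

lemma qFact_ne_zero (hq : ∀ k, 1 ≤ k → q ^ k ≠ 1) (N : ℕ) : qFact q N ≠ 0 := by
  apply Finset.prod_ne_zero_iff.2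
  intro k _
  have := hq (k+1) (by omega)
  intro h
  apply this
  have : q ^ (k+1) = 1 := by linear_combination -h
  exact this

lemma qBinom_self (hq : ∀ k, 1 ≤ k → q ^ k ≠ 1) (a : ℕ) : qBinom q a a = 1 := by
  simp [qBinom, qFact_zero, div_self (qFact_ne_zero hq a)]

lemma qBinom_zero (hq : ∀ k, 1 ≤ k → q ^ k ≠ 1) (a : ℕ) : qBinom q a 0 = 1 := by
  simp [qBinom, qFact_zero, div_self (qFact_ne_zero hq a)]

lemma qPoch_zero {A : K} : qPoch A q 0 = 1 := by simp [qPoch]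

lemma qPoch_succ' (A : K) (k : ℕ) :
    qPoch A q (k + 1) = (1 - A) * qPoch (A * q) q k := by
  rw [qPoch, Finset.prod_range_succ', pow_zero, mul_one, mul_comm]
  congr 1
  apply Finset.prod_congr rfl
  intro i _
  rw [pow_succ']
  ring

lemma qPoch_add (A : K) (k l : ℕ) :
    qPoch A q (k + l) = qPoch A q k * qPoch (A * q ^ k) q l := by
  rw [qPoch, Finset.prod_range_add]
  congr 1
  apply Finset.prod_congr rfl
  intro i _
  rw [pow_add]
  ring

lemma qBinom_pascal (hq : ∀ k, 1 ≤ k → q ^ k ≠ 1) (c r : ℕ) :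
    qBinom q (c + r + 2) (c + 1)
      = qBinom q (c + r + 1) (c + 1) + q ^ (r + 1) * qBinom q (c + r + 1) c := by
  have h1 : c + r + 2 - (c + 1) = r + 1 := by omega
  have h2 : c + r + 1 - (c + 1) = r := by omega
  have h3 : c + r + 1 - c = r + 1 := by omega
  rw [qBinom, qBinom, qBinom, h1, h2, h3]
  rw [show c + r + 2 = (c + r + 1) + 1 by ring, qFact_succ (c + r + 1),
    qFact_succ r, qFact_succ c]
  have hF1 := qFact_ne_zero hq (c + r + 1)
  have hF2 := qFact_ne_zero hq r
  have hF3 := qFact_ne_zero hq c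
  have hs1 : (1 : K) - q ^ (r + 1) ≠ 0 := by
    intro h; exact hq (r+1) (by omega) (by linear_combination -h)
  have hs2 : (1 : K) - q ^ (c + 1) ≠ 0 := by
    intro h; exact hq (c+1) (by omega) (by linear_combination -h)
  field_simp
  ring_nf

lemma qbt (hq : ∀ k, 1 ≤ k → q ^ k ≠ 1) (m : ℕ) (W : K) :
    ∑ k ∈ Finset.range (m + 1), qBinom q m k * W ^ (m - k) * qPoch W q k = 1 := by
  induction m generalizing W with
  | zero => simp [qBinom_self hq, qPoch_zero]
  | succ m ih =>
    rw [Finset.sum_range_succ]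
    have hsplit : ∀ k ∈ Finset.range (m + 1),
        qBinom q (m+1) k * W ^ (m+1-k) * qPoch W q k
          = qBinom q m k * W ^ (m+1-k) * qPoch W q k
            + (if k = 0 then 0 else
                q ^ (m+1-k) * qBinom q m (k-1) * W ^ (m+1-k) * qPoch W q k) := by
      intro k hk
      rw [Finset.mem_range] at hk
      rcases Nat.eq_zero_or_pos k with hk0 | hk0
      · subst hk0
        simp [qBinom_zero hq]
      · obtain ⟨c, rfl⟩ : ∃ c, k = c + 1 := ⟨k - 1, by omega⟩
        obtain ⟨r, hr⟩ : ∃ r, m = c + r + 1 := ⟨m - c - 1, by omega⟩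
        subst hr
        have h1 : c + r + 1 + 1 - (c + 1) = r + 1 := by omega
        rw [if_neg (by omega), qBinom_pascal hq c r, h1]
        simp only [Nat.add_sub_cancel]
        ring
    rw [Finset.sum_congr rfl hsplit, Finset.sum_add_distrib]
    have hA : ∑ k ∈ Finset.range (m + 1),
        qBinom q m k * W ^ (m+1-k) * qPoch W q k = W := by
      have : ∀ k ∈ Finset.range (m + 1),
          qBinom q m k * W ^ (m+1-k) * qPoch W q k
            = W * (qBinom q m k * W ^ (m-k) * qPoch W q k) := by
        intro k hk
        rw [Finset.mem_range] at hk
        rw [show m + 1 - k = (m - k) + 1 by omega, pow_succ]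
        ring
      rw [Finset.sum_congr rfl this, ← Finset.mul_sum, ih, mul_one]
    rw [hA]
    have hB : (∑ k ∈ Finset.range (m + 1),
          if k = 0 then 0 else
            q ^ (m+1-k) * qBinom q m (k-1) * W ^ (m+1-k) * qPoch W q k)
          + qBinom q (m+1) (m+1) * W ^ (m+1-(m+1)) * qPoch W q (m+1)
        = 1 - W := by
      rw [Finset.sum_range_succ']
      simp only [Nat.succ_ne_zero, if_false, if_true, ite_true, reduceIte, add_zero]
      have hterm : ∀ k, k < m + 1 →
          q ^ (m+1-(k+1)) * qBinom q m (k+1-1) * W ^ (m+1-(k+1)) * qPoch W q (k+1)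
            = (1 - W) * (qBinom q m k * (W * q) ^ (m-k) * qPoch (W * q) q k) := by
        intro k hk
        rw [qPoch_succ']
        have : m + 1 - (k + 1) = m - k := by omega
        rw [this]
        simp only [Nat.add_sub_cancel, mul_pow]
        ring
      rw [Finset.sum_congr rfl (fun k hk =>
        hterm k (by have := Finset.mem_range.1 hk; omega))]
      rw [qBinom_self hq, Nat.sub_self, pow_zero, one_mul,
        qPoch_succ' W m]
      have hlast : (1 - W) * qPoch (W * q) q m
          = (1 - W) * (qBinom q m m * (W * q) ^ (m - m) * qPoch (W * q) q m) := by
        rw [qBinom_self hq, Nat.sub_self, pow_zero]; ring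
      rw [hlast, one_mul, ← Finset.mul_sum, ← mul_add,
        show (∑ k ∈ Finset.range m, qBinom q m k * (W * q) ^ (m-k) * qPoch (W*q) q k)
            + qBinom q m m * (W * q) ^ (m - m) * qPoch (W*q) q m
          = ∑ k ∈ Finset.range (m+1), qBinom q m k * (W*q) ^ (m-k) * qPoch (W*q) q k
          from (Finset.sum_range_succ _ _).symm, ih]
      ring
    rw [add_assoc, hB]
    ring
def sumId (N : ℕ) : ℕ := ∑ i ∈ Finset.range N, (i + 1)

lemma sumId_succ (N : ℕ) : sumId (N + 1) = sumId N + (N + 1) := Finset.sum_range_succ _ _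

lemma sumId_add (b c : ℕ) : sumId (b + c) = sumId b + sumId c + b * c := by
  induction c with
  | zero => simp [sumId]
  | succ c ih =>
    rw [show b + (c+1) = (b+c) + 1 by ring, sumId_succ, ih, sumId_succ]
    ring

lemma qFact_inv (hq0 : q ≠ 0) (N : ℕ) :
    qFact q⁻¹ N = (-1) ^ N * (q ^ sumId N)⁻¹ * qFact q N := by
  induction N with
  | zero => simp [qFact, sumId]
  | succ N ih =>
    rw [qFact_succ, qFact_succ, ih, sumId_succ]
    have h : (1 : K) - q⁻¹ ^ (N + 1) = -(q ^ (N+1))⁻¹ * (1 - q ^ (N + 1)) := by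
      rw [inv_pow, neg_mul, mul_sub, mul_one, inv_mul_cancel₀ (pow_ne_zero _ hq0)]
      ring
    rw [h, pow_add q (sumId N) (N+1), pow_succ (-1 : K) N]
    have h1 : (q:K) ^ sumId N ≠ 0 := pow_ne_zero _ hq0
    have h2 : (q:K) ^ (N+1) ≠ 0 := pow_ne_zero _ hq0
    field_simp

lemma qBinom_inv (hq0 : q ≠ 0) (hq : ∀ k, 1 ≤ k → q ^ k ≠ 1) (b c : ℕ) :
    q ^ (b * c) * qBinom q⁻¹ (b + c) b = qBinom q (b + c) b := by
  rw [qBinom, qBinom, Nat.add_sub_cancel_left, qFact_inv hq0, qFact_inv hq0,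
    qFact_inv hq0, sumId_add, pow_add q (sumId b + sumId c) (b*c),
    pow_add q (sumId b) (sumId c), pow_add (-1 : K) b c]
  have h1 : (q:K) ^ sumId b ≠ 0 := pow_ne_zero _ hq0
  have h2 : (q:K) ^ sumId c ≠ 0 := pow_ne_zero _ hq0
  have h3 : (q:K) ^ (b*c) ≠ 0 := pow_ne_zero _ hq0
  have h4 := qFact_ne_zero hq b
  have h5 := qFact_ne_zero hq c
  have h6 : ((-1 : K)) ^ b ≠ 0 := pow_ne_zero _ (by norm_num)
  have h7 : ((-1 : K)) ^ c ≠ 0 := pow_ne_zero _ (by norm_num)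
  field_simp

lemma qBinom_subgroup (hq : ∀ k, 1 ≤ k → q ^ k ≠ 1) (j k r : ℕ) :
    qBinom q (j + k) j * qBinom q (j + k + r) (j + k)
      = qBinom q (j + k + r) j * qBinom q (k + r) k := by
  rw [qBinom, qBinom, qBinom, qBinom, Nat.add_sub_cancel_left, Nat.add_sub_cancel_left,
    Nat.add_sub_cancel_left, show j + k + r - j = k + r by omega]
  have h1 := qFact_ne_zero hq (j + k)
  have h2 := qFact_ne_zero hq (k + r)
  have h3 := qFact_ne_zero hq j
  have h4 := qFact_ne_zero hq k
  have h5 := qFact_ne_zero hq r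
  field_simp

lemma F2_inj : Function.Injective (algebraMap (MvPolynomial (Fin 2) ℚ) F2) :=
  IsFractionRing.injective _ _

lemma XX_ne_zero : XX ≠ 0 := by
  rw [XX, Ne, map_eq_zero_iff _ F2_inj]
  exact MvPolynomial.X_ne_zero _

lemma XX_pow_ne_one : ∀ k, 1 ≤ k → XX ^ k ≠ 1 := by
  intro k hk h
  rw [XX, ← map_pow, show (1 : F2) = algebraMap (MvPolynomial (Fin 2) ℚ) F2 1 from (map_one _).symm] at h
  have h2 := F2_inj h
  have h3 := congrArg (MvPolynomial.eval (fun _ => (0 : ℚ))) h2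
  simp [zero_pow (by omega : k ≠ 0)] at h3

lemma XZ_pow_ne_one : ∀ a b, 1 ≤ b → XX ^ a * ZZ ^ b ≠ 1 := by
  intro a b hb h
  rw [XX, ZZ, ← map_pow, ← map_pow, ← map_mul,
    show (1 : F2) = algebraMap (MvPolynomial (Fin 2) ℚ) F2 1 from (map_one _).symm] at h
  have h2 := F2_inj h
  have h3 := congrArg (MvPolynomial.eval (fun _ => (0 : ℚ))) h2
  simp [zero_pow (by omega : b ≠ 0)] at h3

lemma one_sub_XZ_ne_zero (a b : ℕ) (hb : 1 ≤ b) : (1 : F2) - XX ^ a * ZZ ^ b ≠ 0 := by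
  intro h
  exact XZ_pow_ne_one a b hb (by linear_combination -h)

lemma qPoch_XZ_ne_zero (a k : ℕ) : qPoch (XX ^ a * ZZ) XX k ≠ 0 := by
  rw [qPoch]
  apply Finset.prod_ne_zero_iff.2
  intro i _
  have : XX ^ a * ZZ * XX ^ i = XX ^ (a + i) * ZZ ^ 1 := by rw [pow_add]; ring
  rw [this]
  exact one_sub_XZ_ne_zero _ 1 le_rfl

lemma term_eq (j k₁ r : ℕ) :
    qBinom XX⁻¹ (j + k₁) j *
        (qBinom XX (j + k₁ + r) (j + k₁) * ZZ ^ r / qPoch (XX ^ (j + k₁) * ZZ) XX r)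
      = (qBinom XX (j + k₁ + r) j * (XX ^ (j * (k₁ + r)))⁻¹ / qPoch (XX ^ j * ZZ) XX (k₁ + r))
          * (qBinom XX (k₁ + r) k₁ * (XX ^ j * ZZ) ^ r * qPoch (XX ^ j * ZZ) XX k₁) := by
  have hinv := qBinom_inv XX_ne_zero XX_pow_ne_one j k₁
  have hsub := qBinom_subgroup XX_pow_ne_one j k₁ r
  have hpoch : qPoch (XX ^ j * ZZ) XX (k₁ + r)
      = qPoch (XX ^ j * ZZ) XX k₁ * qPoch (XX ^ (j + k₁) * ZZ) XX r := by
    rw [qPoch_add]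
    congr 2
    rw [pow_add]; ring
  rw [hpoch]
  have h1 := qPoch_XZ_ne_zero j k₁
  have h2 := qPoch_XZ_ne_zero (j + k₁) r
  have h3 : (XX : F2) ^ (j * k₁) ≠ 0 := pow_ne_zero _ XX_ne_zero
  have h4 : (XX : F2) ^ (j * (k₁ + r)) ≠ 0 := pow_ne_zero _ XX_ne_zero
  have hB : qBinom XX⁻¹ (j + k₁) j = (XX ^ (j * k₁))⁻¹ * qBinom XX (j + k₁) j := by
    field_simp at hinv ⊢
    linear_combination hinv
  rw [hB]
  have hXsplit : (XX : F2) ^ (j * (k₁ + r)) = XX ^ (j * k₁) * XX ^ (j * r) := by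
    rw [← pow_add]; ring_nf
  have hWr : ((XX : F2) ^ j * ZZ) ^ r = XX ^ (j * r) * ZZ ^ r := by
    rw [mul_pow, ← pow_mul]
  rw [hXsplit, hWr]
  have h5 : (XX : F2) ^ (j * r) ≠ 0 := pow_ne_zero _ XX_ne_zero
  set a := (XX : F2) ^ (j * k₁) with ha
  set b := (XX : F2) ^ (j * r) with hb
  set p1 := qPoch (XX ^ j * ZZ) XX k₁ with hp1
  set p2 := qPoch (XX ^ (j + k₁) * ZZ) XX r with hp2
  field_simp
  linear_combination ZZ ^ r * hsub

lemma key_identity (n j : ℕ) (hjn : j < n) :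
    gp ((XX ^ j * ZZ) ^ (n - j)) *
      ∑ j' ∈ Finset.Icc (j + 1) n, qBinom XX⁻¹ j' j *
        (qBinom XX n j' * ZZ ^ (n - j') / qPoch (XX ^ j' * ZZ) XX (n - j'))
    = qBinom XX n j * ZZ ^ (n - j) / qPoch (XX ^ j * ZZ) XX (n - j) := by
  obtain ⟨m, hm, hm1⟩ : ∃ m, n = j + m ∧ 1 ≤ m := ⟨n - j, by omega, by omega⟩
  have hnj : n - j = m := by omega
  rw [hnj, ← Finset.Ico_add_one_right_eq_Icc, Finset.sum_Ico_eq_sum_range,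
    show n + 1 - (j + 1) = m from by omega]
  have hterm : ∀ k ∈ Finset.range m,
      qBinom XX⁻¹ (j+1+k) j * (qBinom XX n (j+1+k) * ZZ ^ (n - (j+1+k)) /
          qPoch (XX ^ (j+1+k) * ZZ) XX (n - (j+1+k)))
      = (qBinom XX n j * (XX ^ (j*m))⁻¹ / qPoch (XX ^ j * ZZ) XX m) *
          (qBinom XX m (k+1) * (XX ^ j * ZZ) ^ (m - (k+1)) * qPoch (XX ^ j * ZZ) XX (k+1)) := by
    intro k hk
    rw [Finset.mem_range] at hk
    obtain ⟨r, hr⟩ : ∃ r, m = (k + 1) + r := ⟨m - (k+1), by omega⟩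
    rw [show n - (j+1+k) = r from by omega, show m - (k+1) = r from by omega,
      show j + 1 + k = j + (k+1) from by omega,
      show n = j + (k+1) + r from by omega, hr]
    exact term_eq j (k+1) r
  rw [Finset.sum_congr rfl hterm, ← Finset.mul_sum]
  have hsum : ∑ k ∈ Finset.range m, qBinom XX m (k+1) * (XX ^ j * ZZ) ^ (m-(k+1)) *
      qPoch (XX ^ j * ZZ) XX (k+1) = 1 - (XX ^ j * ZZ) ^ m := by
    have h := qbt XX_pow_ne_one m (XX ^ j * ZZ)
    rw [Finset.sum_range_succ'] at h
    have h0 : qBinom XX m 0 * (XX ^ j * ZZ) ^ (m - 0) * qPoch (XX ^ j * ZZ) XX 0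
        = (XX ^ j * ZZ) ^ m := by
      rw [qBinom_zero XX_pow_ne_one, qPoch_zero]; simp
    rw [h0] at h
    linear_combination h
  rw [hsum]
  have hWm : ((XX : F2) ^ j * ZZ) ^ m = XX ^ (j*m) * ZZ ^ m := by
    rw [mul_pow, ← pow_mul]
  rw [gp, hWm]
  have hne : (1 : F2) - XX ^ (j*m) * ZZ ^ m ≠ 0 := one_sub_XZ_ne_zero _ m hm1
  have hP := qPoch_XZ_ne_zero j m
  have hX : (XX : F2) ^ (j*m) ≠ 0 := pow_ne_zero _ XX_ne_zero
  have hZm : (ZZ : F2) ^ m ≠ 0 := pow_ne_zero _ (by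
    rw [ZZ, Ne, map_eq_zero_iff _ F2_inj]; exact MvPolynomial.X_ne_zero _)
  set a := (XX : F2) ^ (j*m) with ha
  set z := (ZZ : F2) ^ m with hz
  set p := qPoch (XX ^ j * ZZ) XX m with hp
  field_simp

lemma minI_empty (n : ℕ) : minI n ∅ = n := by simp [minI]

lemma minI_le_of_mem {n i : ℕ} {I : Finset ℕ} (hi : i ∈ I) : minI n I ≤ i :=
  Finset.min'_le _ _ (Finset.mem_insert_of_mem hi)

lemma minI_le_n (n : ℕ) (I : Finset ℕ) : minI n I ≤ n :=
  Finset.min'_le _ _ (Finset.mem_insert_self n I)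

lemma minI_mem (n : ℕ) (I : Finset ℕ) : minI n I ∈ insert n I := Finset.min'_mem _ _

lemma le_minI {n a : ℕ} {I : Finset ℕ} (han : a ≤ n) (h : ∀ i ∈ I, a ≤ i) :
    a ≤ minI n I := by
  apply Finset.le_min'
  intro y hy
  rcases Finset.mem_insert.1 hy with rfl | hy
  · exact han
  · exact h y hy

lemma minI_eq_min' {n : ℕ} {I : Finset ℕ} (hI : I.Nonempty) (hsub : I ⊆ Finset.range n) :
    minI n I = I.min' hI := by
  rw [minI, Finset.min'_insert n I hI]
  exact min_eq_right (le_of_lt (Finset.mem_range.1 (hsub (Finset.min'_mem I hI))))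

lemma minI_eq_n_iff {n : ℕ} {I : Finset ℕ} (hsub : I ⊆ Finset.range n) :
    minI n I = n ↔ I = ∅ := by
  constructor
  · intro h
    by_contra hne
    obtain ⟨i, hi⟩ := Finset.nonempty_iff_ne_empty.2 hne
    have h1 := minI_le_of_mem (n := n) hi
    have h2 := Finset.mem_range.1 (hsub hi)
    omega
  · rintro rfl; exact minI_empty n

lemma qMultinom_empty {F : Type*} [Field F] (X : F) (n : ℕ) : qMultinom X n ∅ = 1 := by
  simp [qMultinom]

lemma qMultinom_insert {F : Type*} [Field F] (X : F) (n j : ℕ) (I : Finset ℕ)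
    (hj : ∀ i ∈ I, j < i) (hsub : I ⊆ Finset.range n) :
    qMultinom X n (insert j I) = qBinom X (minI n I) j * qMultinom X n I := by
  have hnotmem : j ∉ I := fun h => lt_irrefl j (hj j h)
  have hsort : (insert j I).sort (· ≤ ·) = j :: I.sort (· ≤ ·) :=
    Finset.sort_insert _ (fun b hb => le_of_lt (hj b hb)) hnotmem
  rcases eq_or_ne I ∅ with rfl | hne
  · rw [qMultinom, hsort]
    simp [qMultinom, minI_empty]
  · have hI : I.Nonempty := Finset.nonempty_iff_ne_empty.2 hne
    cases hL : I.sort (· ≤ ·) with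
    | nil =>
      exfalso
      have := Finset.length_sort (α := ℕ) (· ≤ ·) (s := I)
      rw [hL] at this
      simp at this
      exact hne (Finset.card_eq_zero.1 this.symm)
    | cons a L' =>
      have hlen : 0 < (I.sort (· ≤ ·)).length := by rw [hL]; simp
      have ha : a = minI n I := by
        rw [minI_eq_min' hI hsub]
        have hamem : a ∈ I := by
          rw [← Finset.mem_sort (α := ℕ) (· ≤ ·), hL]; exact List.mem_cons_self
        have hsorted := Finset.pairwise_sort I (· ≤ ·)
        rw [hL, List.pairwise_cons] at hsorted
        refine le_antisymm (Finset.le_min' _ _ _ ?_) (Finset.min'_le _ _ hamem)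
        intro y hy
        have : y ∈ I.sort (· ≤ ·) := (Finset.mem_sort (α := ℕ) (· ≤ ·)).2 hy
        rw [hL, List.mem_cons] at this
        rcases this with rfl | hyL
        · exact le_rfl
        · exact hsorted.1 y hyL
      rw [qMultinom, hsort, hL, qMultinom, hL]
      simp only [List.tail_cons, List.zip_cons_cons, List.map_cons, List.prod_cons,
        List.cons_append]
      rw [← ha]

lemma S_eq (n : ℕ) (hn : 1 ≤ n) : ∀ d j, j ≤ n → n - j ≤ d →
    ∑ I ∈ (Finset.range n).powerset.filter (fun I => minI n I = j),
        qMultinom XX⁻¹ n I * ∏ i ∈ I, gp ((XX ^ i * ZZ) ^ (n - i))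
      = qBinom XX n j * ZZ ^ (n - j) / qPoch (XX ^ j * ZZ) XX (n - j) := by
  intro d
  induction d with
  | zero =>
    intro j hj hd
    have hjn : n = j := by omega
    subst hjn
    have hfil : (Finset.range n).powerset.filter (fun I => minI n I = n) = {∅} := by
      ext I
      simp only [Finset.mem_filter, Finset.mem_powerset, Finset.mem_singleton]
      constructor
      · rintro ⟨hsub, hmin⟩
        exact (minI_eq_n_iff hsub).1 hmin
      · rintro rfl
        exact ⟨Finset.empty_subset _, minI_empty n⟩
    rw [hfil, Finset.sum_singleton, qMultinom_empty, Nat.sub_self]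
    simp [qBinom_self XX_pow_ne_one, qPoch_zero]
  | succ d ih =>
    intro j hj hd
    rcases Nat.lt_or_ge d (n - j) with hlt | hge
    swap
    · exact ih j hj hge
    have hjn : j < n := by omega
    have hdnj : n - j = d + 1 := by omega
    -- Step 1: rewrite the filter as an image
    have himg : (Finset.range n).powerset.filter (fun I => minI n I = j)
        = ((Finset.Ico (j+1) n).powerset).image (insert j) := by
      ext I
      simp only [Finset.mem_filter, Finset.mem_powerset, Finset.mem_image]
      constructor
      · rintro ⟨hsub, hmin⟩
        have hjI : j ∈ I := by
          have hmem := minI_mem n I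
          rw [hmin] at hmem
          rcases Finset.mem_insert.1 hmem with h | h
          · omega
          · exact h
        refine ⟨I.erase j, ?_, Finset.insert_erase hjI⟩
        intro i hi
        have hiI := Finset.mem_of_mem_erase hi
        have hne := Finset.ne_of_mem_erase hi
        have h1 : j ≤ i := hmin ▸ minI_le_of_mem hiI
        have h2 : i < n := Finset.mem_range.1 (hsub hiI)
        exact Finset.mem_Ico.2 ⟨by omega, h2⟩
      · rintro ⟨I', hI', rfl⟩
        have hsub' : I' ⊆ Finset.range n := fun i hi =>
          Finset.mem_range.2 (Finset.mem_Ico.1 (hI' hi)).2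
        have hgt : ∀ i ∈ I', j < i := fun i hi => (Finset.mem_Ico.1 (hI' hi)).1
        constructor
        · intro i hi
          rcases Finset.mem_insert.1 hi with rfl | hi
          · exact Finset.mem_range.2 hjn
          · exact hsub' hi
        · refine le_antisymm (minI_le_of_mem (Finset.mem_insert_self j I')) ?_
          apply le_minI (by omega)
          intro i hi
          rcases Finset.mem_insert.1 hi with rfl | hi
          · exact le_rfl
          · exact le_of_lt (hgt i hi)
    rw [himg, Finset.sum_image (by
      intro I₁ h₁ I₂ h₂ heq
      rw [Finset.mem_coe, Finset.mem_powerset] at h₁ h₂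
      have m₁ : j ∉ I₁ := fun h => by have := (Finset.mem_Ico.1 (h₁ h)).1; omega
      have m₂ : j ∉ I₂ := fun h => by have := (Finset.mem_Ico.1 (h₂ h)).1; omega
      have := congrArg (fun s => Finset.erase s j) heq
      simpa [Finset.erase_insert m₁, Finset.erase_insert m₂] using this
      )]
    -- Step 2: per-term rewrite
    have hterm : ∀ I' ∈ (Finset.Ico (j+1) n).powerset,
        qMultinom XX⁻¹ n (insert j I') * ∏ i ∈ insert j I', gp ((XX ^ i * ZZ) ^ (n - i))
          = gp ((XX ^ j * ZZ) ^ (n - j)) * (qBinom XX⁻¹ (minI n I') j *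
              (qMultinom XX⁻¹ n I' * ∏ i ∈ I', gp ((XX ^ i * ZZ) ^ (n - i)))) := by
      intro I' hI'
      rw [Finset.mem_powerset] at hI'
      have hgt : ∀ i ∈ I', j < i := fun i hi => (Finset.mem_Ico.1 (hI' hi)).1
      have hsub' : I' ⊆ Finset.range n := fun i hi =>
        Finset.mem_range.2 (Finset.mem_Ico.1 (hI' hi)).2
      have hnotmem : j ∉ I' := fun h => lt_irrefl j (hgt j h)
      rw [qMultinom_insert XX⁻¹ n j I' hgt hsub', Finset.prod_insert hnotmem]
      ring
    rw [Finset.sum_congr rfl hterm, ← Finset.mul_sum]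
    -- Step 3: fiberwise decomposition
    have hmaps : ∀ I' ∈ (Finset.Ico (j+1) n).powerset, minI n I' ∈ Finset.Icc (j+1) n := by
      intro I' hI'
      rw [Finset.mem_powerset] at hI'
      refine Finset.mem_Icc.2 ⟨?_, minI_le_n n I'⟩
      apply le_minI (by omega)
      intro i hi
      exact (Finset.mem_Ico.1 (hI' hi)).1
    rw [← Finset.sum_fiberwise_of_maps_to hmaps]
    -- Step 4: identify the fibers
    have hfib : ∀ j' ∈ Finset.Icc (j+1) n,
        ∑ I' ∈ (Finset.Ico (j+1) n).powerset.filter (fun I' => minI n I' = j'),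
          qBinom XX⁻¹ (minI n I') j *
            (qMultinom XX⁻¹ n I' * ∏ i ∈ I', gp ((XX ^ i * ZZ) ^ (n - i)))
        = qBinom XX⁻¹ j' j *
            (qBinom XX n j' * ZZ ^ (n - j') / qPoch (XX ^ j' * ZZ) XX (n - j')) := by
      intro j' hj'
      rw [Finset.mem_Icc] at hj'
      have hstep : ∀ I' ∈ (Finset.Ico (j+1) n).powerset.filter (fun I' => minI n I' = j'),
          qBinom XX⁻¹ (minI n I') j *
              (qMultinom XX⁻¹ n I' * ∏ i ∈ I', gp ((XX ^ i * ZZ) ^ (n - i)))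
          = qBinom XX⁻¹ j' j *
              (qMultinom XX⁻¹ n I' * ∏ i ∈ I', gp ((XX ^ i * ZZ) ^ (n - i))) := by
        intro I' hI'
        rw [(Finset.mem_filter.1 hI').2]
      rw [Finset.sum_congr rfl hstep, ← Finset.mul_sum]
      congr 1
      have hsets : (Finset.Ico (j+1) n).powerset.filter (fun I' => minI n I' = j')
          = (Finset.range n).powerset.filter (fun I' => minI n I' = j') := by
        ext I
        simp only [Finset.mem_filter, Finset.mem_powerset]
        constructor
        · rintro ⟨hsub, hmin⟩
          exact ⟨fun i hi => Finset.mem_range.2 (Finset.mem_Ico.1 (hsub hi)).2, hmin⟩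
        · rintro ⟨hsub, hmin⟩
          refine ⟨fun i hi => ?_, hmin⟩
          have h1 : j' ≤ i := hmin ▸ minI_le_of_mem hi
          have h2 : i < n := Finset.mem_range.1 (hsub hi)
          exact Finset.mem_Ico.2 ⟨by omega, h2⟩
      rw [hsets]
      exact ih j' hj'.2 (by omega)
    rw [Finset.sum_congr rfl hfib]
    exact key_identity n j hjn

theorem S_n_j_identity (n : ℕ) (hn : 1 ≤ n) (j : ℕ) (hj : j ≤ n) :
    ∑ I ∈ (Finset.range n).powerset.filter (fun I => minI n I = j),
        qMultinom XX⁻¹ n I * ∏ i ∈ I, gp ((XX ^ i * ZZ) ^ (n - i))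
      = qBinom XX n j * ZZ ^ (n - j) / qPoch (XX ^ j * ZZ) XX (n - j) :=
  S_eq n hn (n - j) j hj le_rfl

end
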